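/- Let H be a real Hilbert space with fundamental symmetry Θ and Krein inner product B(x, y) := ⟪x, Θ y⟫. Let W be a closed subspace of H which is hypermaximal neutral, i.e. W = {v ∈ H : B(v, w) = 0 for all w ∈ W}. Then there exists a unique linear map u : H → H such that u ∘ u = id, B(u x, u y) = −B(x, y) for all x, y, u ∘ Θ = −Θ ∘ u, and the fixed-point set of u is exactly W, i.e. {v ∈ H : u v = v} = W. -/

import Mathlib

open scoped RealInnerProductSpace

/-- In a real Krein space, every closed hypermaximal neutral subspace `W`
is the fixed-point set of a unique involutive adapted anti-isometry `u`. -/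
theorem stmt_1 {H : Type*} [NormedAddCommGroup H] [InnerProductSpace ℝ H] [CompleteSpace H]
    (Θ : H →L[ℝ] H) (hΘ2 : ∀ x, Θ (Θ x) = x)
    (hΘsym : ∀ x y, ⟪Θ x, y⟫ = ⟪x, Θ y⟫)
    (W : Submodule ℝ H) (hWclosed : IsClosed (W : Set H))
    (hW : (W : Set H) = {v : H | ∀ w ∈ W, ⟪v, Θ w⟫ = 0}) :
    ∃! u : H →ₗ[ℝ] H,
      (∀ x, u (u x) = x) ∧
      (∀ x y, ⟪u x, Θ (u y)⟫ = -⟪x, Θ y⟫) ∧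
      (∀ x, u (Θ x) = -Θ (u x)) ∧
      {v : H | u v = v} = (W : Set H) := by
  haveI : CompleteSpace W := hWclosed.completeSpace_coe
  have hmem : ∀ v : H, v ∈ W ↔ ∀ w ∈ W, ⟪v, Θ w⟫ = 0 := by
    intro v
    constructor
    · intro hv
      have : v ∈ {v : H | ∀ w ∈ W, ⟪v, Θ w⟫ = 0} := hW ▸ hv
      exact this
    · intro hv
      have : v ∈ (W : Set H) := by rw [hW]; exact hv
      exact this
  have hΘWperp : ∀ w ∈ W, Θ w ∈ Wᗮ := by
    intro w hw
    rw [Submodule.mem_orthogonal]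
    intro x hx
    exact (hmem x).mp hx w hw
  have hΘperpW : ∀ v ∈ Wᗮ, Θ v ∈ W := by
    intro v hv
    rw [hmem]
    intro w hw
    rw [hΘsym, hΘ2]
    exact Submodule.inner_left_of_mem_orthogonal hw hv
  set u₀ : H →ₗ[ℝ] H := (W.reflection).toLinearEquiv.toLinearMap with hu₀
  have hu₀apply : ∀ x, u₀ x = W.reflection x := fun _ => rfl
  have hfixW : ∀ w ∈ W, u₀ w = w := fun w hw => Submodule.reflection_mem_subspace_eq_self hw
  have hnegP : ∀ v ∈ Wᗮ, u₀ v = -v := fun v hv =>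
    Submodule.reflection_mem_subspace_orthogonalComplement_eq_neg hv
  -- decomposition
  have hdecomp : ∀ x : H, ∃ p q : H, p ∈ W ∧ q ∈ Wᗮ ∧ x = p + q := by
    intro x
    refine ⟨W.starProjection x, x - W.starProjection x, W.starProjection_apply_mem x,
      Submodule.sub_starProjection_mem_orthogonal x, by abel⟩
  have hu₀2 : ∀ x, u₀ (u₀ x) = x := fun x => Submodule.reflection_reflection W x
  have hu₀Θ : ∀ x, u₀ (Θ x) = -Θ (u₀ x) := by
    intro x
    obtain ⟨p, q, hp, hq, rfl⟩ := hdecomp x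
    have h1 : u₀ (p + q) = p - q := by
      rw [map_add, hfixW p hp, hnegP q hq]; abel
    rw [h1, map_add, map_add, map_sub, hfixW _ (hΘperpW q hq), hnegP _ (hΘWperp p hp)]
    module
  have hu₀iso : ∀ x y, ⟪u₀ x, u₀ y⟫ = ⟪x, y⟫ := fun x y =>
    (W.reflection).inner_map_map x y
  have hu₀anti : ∀ x y, ⟪u₀ x, Θ (u₀ y)⟫ = -⟪x, Θ y⟫ := by
    intro x y
    have : Θ (u₀ y) = -u₀ (Θ y) := by rw [hu₀Θ y]; module
    rw [this, inner_neg_right, hu₀iso]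
  have hu₀fix : {v : H | u₀ v = v} = (W : Set H) := by
    ext v
    simp only [Set.mem_setOf_eq, SetLike.mem_coe, hu₀apply]
    exact Submodule.reflection_eq_self_iff v
  refine ⟨u₀, ⟨hu₀2, hu₀anti, hu₀Θ, hu₀fix⟩, ?_⟩
  rintro u ⟨h2, hanti, hΘu, hfix⟩
  apply LinearMap.ext
  intro x
  set p := (2 : ℝ)⁻¹ • (x + u x) with hpdef
  set q := (2 : ℝ)⁻¹ • (x - u x) with hqdef
  have hpq : x = p + q := by rw [hpdef, hqdef]; module
  have hupq : u x = p - q := by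
    have h1 : u p = p := by
      rw [hpdef, map_smul, map_add, h2]
      module
    have h2' : u q = -q := by
      rw [hqdef, map_smul, map_sub, h2]
      module
    calc u x = u (p + q) := by rw [← hpq]
    _ = p - q := by rw [map_add, h1, h2']; module
  have hpW : p ∈ W := by
    have hup : u p = p := by
      rw [hpdef, map_smul, map_add, h2]; module
    have hm : p ∈ {v : H | u v = v} := hup
    rw [hfix] at hm
    exact hm
  have hqperp : q ∈ Wᗮ := by
    have huq : u q = -q := by
      rw [hqdef, map_smul, map_sub, h2]; module
    have hΘq : Θ q ∈ W := by
      have : u (Θ q) = Θ q := by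
        rw [hΘu q, huq]; simp
      have hm : Θ q ∈ {v : H | u v = v} := this
      rw [hfix] at hm
      exact hm
    have : Θ (Θ q) ∈ Wᗮ := hΘWperp _ hΘq
    rwa [hΘ2] at this
  have : u₀ x = p - q := by
    rw [hpq, map_add, hfixW p hpW, hnegP q hqperp]; module
  rw [hupq, this]
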